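/- The map ν : ℂ² → ℂ⁴, ν(s,t) = (s³, s t², t³, s² t), restricted to ℂ² \ {(0,0)}, is exactly 3-to-1 onto its image: every point in the image of ν other than ν(0,0) has exactly 3 preimages. -/

import Mathlib

/-- The parameterization of the affine cone over the twisted cubic. -/
noncomputable def ν (p : ℂ × ℂ) : ℂ × ℂ × ℂ × ℂ :=
  (p.1 ^ 3, p.1 * p.2 ^ 2, p.2 ^ 3, p.1 ^ 2 * p.2)

lemma cube_roots_ncard : ({ω : ℂ | ω ^ 3 = 1}).ncard = 3 := by
  have h : {ω : ℂ | ω ^ 3 = 1} = ↑(Polynomial.nthRootsFinset 3 (1 : ℂ)) := by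
    ext x
    simp [Polynomial.mem_nthRootsFinset (by norm_num : 0 < 3)]
  rw [h, Set.ncard_coe_finset,
    (Complex.isPrimitiveRoot_exp 3 (by norm_num)).card_nthRootsFinset]

/-- Away from `ν (0,0)`, the map `ν` is exactly 3-to-1 onto its image. -/
theorem nu_three_to_one (q : ℂ × ℂ × ℂ × ℂ) (hq : q ∈ Set.range ν)
    (hne : q ≠ ν (0, 0)) : (ν ⁻¹' {q}).ncard = 3 := by
  obtain ⟨⟨s, t⟩, rfl⟩ := hq
  have hst : s ≠ 0 ∨ t ≠ 0 := by
    by_contra h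
    push_neg at h
    exact hne (by rw [h.1, h.2])
  have key : ν ⁻¹' {ν (s, t)} = (fun ω : ℂ => (ω * s, ω * t)) '' {ω | ω ^ 3 = 1} := by
    ext ⟨a, b⟩
    simp only [Set.mem_preimage, Set.mem_singleton_iff, Set.mem_image, Set.mem_setOf_eq,
      ν, Prod.mk.injEq, Prod.ext_iff]
    constructor
    · rintro ⟨h1, h2, h3, h4⟩
      rcases eq_or_ne s 0 with hs | hs
      · subst hs
        have ht : t ≠ 0 := hst.resolve_left (by simp)
        have ha : a = 0 := by
          have : a ^ 3 = 0 := by simpa using h1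
          exact pow_eq_zero_iff (by norm_num) |>.mp this
        exact ⟨b / t, by rw [div_pow, h3, div_self (pow_ne_zero 3 ht)], by simp [ha],
          div_mul_cancel₀ b ht⟩
      · have ha : a ≠ 0 := by
          intro h; rw [h] at h1
          exact hs (pow_eq_zero_iff (n := 3) (by norm_num) |>.mp (by simpa using h1.symm))
        refine ⟨a / s, by rw [div_pow, h1, div_self (pow_ne_zero 3 hs)],
          div_mul_cancel₀ a hs, ?_⟩
        -- need (a/s) * t = b, i.e. a * t = s * b
        have h5 : a ^ 2 * (a * t) = a ^ 2 * (s * b) := by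
          calc a ^ 2 * (a * t) = a ^ 3 * t := by ring
          _ = s ^ 3 * t := by rw [h1]
          _ = s * (s ^ 2 * t) := by ring
          _ = s * (a ^ 2 * b) := by rw [h4]
          _ = a ^ 2 * (s * b) := by ring
        have h6 := mul_left_cancel₀ (pow_ne_zero 2 ha) h5
        field_simp
        linear_combination h6
    · rintro ⟨ω, hω, rfl, rfl⟩
      refine ⟨?_, ?_, ?_, ?_⟩ <;>
        · ring_nf
          rw [show ω ^ 3 = 1 from hω] <;> ring
  rw [key, Set.ncard_image_of_injective _ ?_, cube_roots_ncard]
  intro x y hxy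
  simp only [Prod.mk.injEq] at hxy
  rcases hst with hs | ht
  · exact mul_right_cancel₀ hs hxy.1
  · exact mul_right_cancel₀ ht hxy.2
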